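/- Let Ω₃ = [0,1] ∪ [a, a+1] ∪ [b, b+1] with a = 3^j(3r+1) and b = 3^j(3s+2) for integers j ≥ 0, r, s (so the intervals are disjoint). Then Λ = ℤ ∪ (ℤ + 1/3^{j+1}) ∪ (ℤ + 2/3^{j+1}) is a spectrum for Ω₃, i.e., {e^{2πiλx} : λ ∈ Λ} restricted to Ω₃ forms an orthogonal basis of L²(Ω₃). -/

import Mathlib

open MeasureTheory

/-- `Λ` is a spectrum for `Ω`: the exponentials `e^{2πiλx}`, `λ ∈ Λ`, restricted to `Ω`,
are mutually orthogonal and complete in `L²(Ω)`. -/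
def IsSpectrum (Ω Λ : Set ℝ) : Prop :=
  (∀ l ∈ Λ, ∀ m ∈ Λ, l ≠ m →
      (∫ x in Ω, Complex.exp (2 * (Real.pi : ℂ) * Complex.I * ((l : ℂ) - (m : ℂ)) * (x : ℂ))) = 0) ∧
  (∀ f : ℝ → ℂ, MemLp f 2 (volume.restrict Ω) →
      (∀ l ∈ Λ,
        (∫ x in Ω, f x * Complex.exp (-(2 * (Real.pi : ℂ) * Complex.I * (l : ℂ) * (x : ℂ)))) = 0) →
      f =ᵐ[volume.restrict Ω] 0)

noncomputable section
open Set
local notation "𝕋" => AddCircle (1:ℝ)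


-- shift measure preserving
lemma aux3_mp_shift (c : ℝ) : MeasurePreserving (fun t : ℝ => c + t)
    (volume.restrict (Set.Ioc (0:ℝ) 1)) (volume.restrict (Set.Ioc c (c+1))) := by
  have hm : Measurable (fun t : ℝ => c + t) := by fun_prop
  refine ⟨hm, ?_⟩
  rw [show Set.Ioc (0:ℝ) 1 = (fun t : ℝ => c + t) ⁻¹' (Set.Ioc c (c+1)) by simp,
    ← Measure.restrict_map hm measurableSet_Ioc,
    (measurePreserving_add_left volume c).map_eq]

lemma aux3_mp_unshift (c : ℝ) : MeasurePreserving (fun t : ℝ => -c + t)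
    (volume.restrict (Set.Ioc c (c+1))) (volume.restrict (Set.Ioc (0:ℝ) 1)) := by
  have hm : Measurable (fun t : ℝ => -c + t) := by fun_prop
  refine ⟨hm, ?_⟩
  have hpre : Set.Ioc c (c+1) = (fun t : ℝ => -c + t) ⁻¹' (Set.Ioc (0:ℝ) 1) := by
    ext x
    simp only [Set.mem_Ioc, Set.mem_preimage]
    constructor <;> (rintro ⟨h1, h2⟩; constructor <;> linarith)
  rw [hpre, ← Measure.restrict_map hm measurableSet_Ioc,
    (measurePreserving_add_left volume (-c)).map_eq]

lemma aux3_int_shift (c : ℝ) (G : ℝ → ℂ) :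
    (∫ x in Set.Icc c (c+1), G x) = ∫ t in Set.Ioc (0:ℝ) 1, G (c + t) := by
  rw [integral_Icc_eq_integral_Ioc]
  exact ((aux3_mp_shift c).integral_comp (Homeomorph.addLeft c).measurableEmbedding G).symm

-- cube roots of unity
lemma aux3_root (η : ℂ) (hη : η = Complex.exp (2*(Real.pi:ℂ)*Complex.I/3) ∨
    η = Complex.exp (-(2*(Real.pi:ℂ)*Complex.I/3))) : η^3 = 1 ∧ 1 + η + η^2 = 0 := by
  have h2pi : (2*(Real.pi:ℂ)*Complex.I) ≠ 0 := by
    simp [Real.pi_ne_zero, Complex.I_ne_zero, Complex.ofReal_ne_zero]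
  have h3 : η ^ 3 = 1 := by
    rcases hη with h | h <;> rw [h, ← Complex.exp_nat_mul]
    · rw [show ((3:ℕ):ℂ) * (2*(Real.pi:ℂ)*Complex.I/3) = ((1:ℤ):ℂ) * (2*(Real.pi:ℂ)*Complex.I) by
        push_cast; ring, Complex.exp_int_mul_two_pi_mul_I]
    · rw [show ((3:ℕ):ℂ) * (-(2*(Real.pi:ℂ)*Complex.I/3)) = ((-1:ℤ):ℂ) * (2*(Real.pi:ℂ)*Complex.I) by
        push_cast; ring, Complex.exp_int_mul_two_pi_mul_I]
  have hne : η ≠ 1 := by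
    rcases hη with h | h <;> rw [h] <;> intro hc <;> rw [Complex.exp_eq_one_iff] at hc <;>
      obtain ⟨n, hn⟩ := hc
    · have h1 : ((3*n : ℤ) : ℂ) * (2*(Real.pi:ℂ)*Complex.I)
          = 1 * (2*(Real.pi:ℂ)*Complex.I) := by push_cast; linear_combination -3 * hn
      have h2 := mul_right_cancel₀ h2pi h1
      have h4 : (3*n : ℤ) = 1 := by exact_mod_cast h2
      omega
    · have h1 : ((3*n : ℤ) : ℂ) * (2*(Real.pi:ℂ)*Complex.I)
          = (-1) * (2*(Real.pi:ℂ)*Complex.I) := by push_cast; linear_combination -3 * hn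
      have h2 := mul_right_cancel₀ h2pi h1
      have h5 : (3*n : ℤ) = -1 := by exact_mod_cast h2
      omega
  refine ⟨h3, ?_⟩
  rcases mul_eq_zero.mp (show (η - 1) * (1 + η + η^2) = 0 by linear_combination h3) with h | h
  · exact absurd (by linear_combination h) hne
  · exact h

-- exponential evaluation
lemma aux3_exp_eval (t : ℝ) (m : ℤ) (e : ℕ) (h : t = m + e/3) :
    Complex.exp (2*(Real.pi:ℂ)*Complex.I*(t:ℂ)) = Complex.exp (2*(Real.pi:ℂ)*Complex.I/3) ^ e := by
  rw [show ((t:ℂ)) = ((m:ℂ) + e/3) by rw [h]; push_cast; ring]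
  rw [show 2*(Real.pi:ℂ)*Complex.I*((m:ℂ) + e/3)
      = (m:ℂ) * (2*(Real.pi:ℂ)*Complex.I) + (e:ℕ) * (2*(Real.pi:ℂ)*Complex.I/3) by push_cast; ring,
    Complex.exp_add, Complex.exp_int_mul_two_pi_mul_I, one_mul, Complex.exp_nat_mul]

lemma aux3_exp_eval_neg (t : ℝ) (m : ℤ) (e : ℕ) (h : t = m + e/3) :
    Complex.exp (-(2*(Real.pi:ℂ)*Complex.I*(t:ℂ)))
      = Complex.exp (-(2*(Real.pi:ℂ)*Complex.I/3)) ^ e := by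
  rw [show ((t:ℂ)) = ((m:ℂ) + e/3) by rw [h]; push_cast; ring]
  rw [show -(2*(Real.pi:ℂ)*Complex.I*((m:ℂ) + e/3))
      = (-m:ℤ) * (2*(Real.pi:ℂ)*Complex.I) + (e:ℕ) * (-(2*(Real.pi:ℂ)*Complex.I/3)) by
      push_cast; ring,
    Complex.exp_add, Complex.exp_int_mul_two_pi_mul_I, one_mul, Complex.exp_nat_mul]

-- lambda nonzero
lemma aux3_lam_ne_zero (j : ℕ) (u d : ℤ) (h3 : ¬ (3:ℤ) ∣ d) :
    (u:ℝ) + d / 3^(j+1) ≠ 0 := by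
  intro h
  have h9 : (3:ℝ)^(j+1) ≠ 0 := by positivity
  have h' : (u:ℝ) * 3^(j+1) + d = 0 := by field_simp at h; linarith
  have hz : (u * 3^(j+1) + d : ℤ) = 0 := by exact_mod_cast h'
  have hd : d = -(u * 3^(j+1)) := by omega
  exact h3 (hd ▸ dvd_neg.mpr (Dvd.dvd.mul_left (dvd_pow_self 3 (Nat.succ_ne_zero j)) u))



lemma aux3_piece (a b : ℝ)
    (hd1 : Disjoint (Set.Icc (0:ℝ) 1) (Set.Icc a (a+1)))
    (hd2 : Disjoint (Set.Icc (0:ℝ) 1) (Set.Icc b (b+1)))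
    (hd3 : Disjoint (Set.Icc a (a+1)) (Set.Icc b (b+1)))
    (lam : ℝ) (hlam : lam ≠ 0) :
    (∫ x in (Set.Icc (0:ℝ) 1 ∪ Set.Icc a (a+1) ∪ Set.Icc b (b+1)),
        Complex.exp (2*(Real.pi:ℂ)*Complex.I*(lam:ℂ)*(x:ℂ)))
      = (Complex.exp (2*(Real.pi:ℂ)*Complex.I*(lam:ℂ)) - 1)
        * (1 + Complex.exp (2*(Real.pi:ℂ)*Complex.I*(lam:ℂ)*(a:ℂ))
             + Complex.exp (2*(Real.pi:ℂ)*Complex.I*(lam:ℂ)*(b:ℂ)))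
        / (2*(Real.pi:ℂ)*Complex.I*(lam:ℂ)) := by
  set β : ℂ := 2*(Real.pi:ℂ)*Complex.I*(lam:ℂ) with hβ
  have hβ0 : β ≠ 0 := by
    simp only [hβ]
    simp [Real.pi_ne_zero, Complex.I_ne_zero, Complex.ofReal_ne_zero, hlam]
  have hcont : Continuous (fun x : ℝ => Complex.exp (β * (x:ℂ))) := by
    exact Complex.continuous_exp.comp (by fun_prop)
  have hint : ∀ c : ℝ, (∫ x in Set.Icc c (c+1), Complex.exp (β*(x:ℂ)))
      = (Complex.exp (β*(c:ℂ)) * Complex.exp β - Complex.exp (β*(c:ℂ)))/β := by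
    intro c
    rw [integral_Icc_eq_integral_Ioc, ← intervalIntegral.integral_of_le (by linarith : c ≤ c+1),
      integral_exp_mul_complex hβ0,
      show β * (((c+1 : ℝ)):ℂ) = β*(c:ℂ) + β by push_cast; ring, Complex.exp_add]
  have hsplit : (∫ x in (Set.Icc (0:ℝ) 1 ∪ Set.Icc a (a+1) ∪ Set.Icc b (b+1)),
        Complex.exp (β*(x:ℂ)))
      = (∫ x in Set.Icc (0:ℝ) 1, Complex.exp (β*(x:ℂ)))
        + (∫ x in Set.Icc a (a+1), Complex.exp (β*(x:ℂ)))
        + (∫ x in Set.Icc b (b+1), Complex.exp (β*(x:ℂ))) := by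
    rw [setIntegral_union (Disjoint.union_left hd2 hd3) measurableSet_Icc,
      setIntegral_union hd1 measurableSet_Icc hcont.integrableOn_Icc hcont.integrableOn_Icc]
    · exact (hcont.integrableOn_Icc.union hcont.integrableOn_Icc)
    · exact hcont.integrableOn_Icc
  calc (∫ x in (Set.Icc (0:ℝ) 1 ∪ Set.Icc a (a+1) ∪ Set.Icc b (b+1)),
        Complex.exp (2*(Real.pi:ℂ)*Complex.I*(lam:ℂ)*(x:ℂ)))
      = (∫ x in Set.Icc (0:ℝ) 1, Complex.exp (β*(x:ℂ)))
        + (∫ x in Set.Icc a (a+1), Complex.exp (β*(x:ℂ)))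
        + (∫ x in Set.Icc b (b+1), Complex.exp (β*(x:ℂ))) := hsplit
    _ = (Complex.exp (β*((0:ℝ):ℂ)) * Complex.exp β - Complex.exp (β*((0:ℝ):ℂ)))/β
        + (Complex.exp (β*(a:ℂ)) * Complex.exp β - Complex.exp (β*(a:ℂ)))/β
        + (Complex.exp (β*(b:ℂ)) * Complex.exp β - Complex.exp (β*(b:ℂ)))/β := by
        rw [show Set.Icc (0:ℝ) 1 = Set.Icc (0:ℝ) (0+1) by norm_num, hint 0, hint a, hint b]
    _ = (Complex.exp β - 1) * (1 + Complex.exp (β*(a:ℂ)) + Complex.exp (β*(b:ℂ))) / β := by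
        rw [show β*((0:ℝ):ℂ) = 0 by push_cast; ring, Complex.exp_zero]
        field_simp

lemma aux3_offdiag (a b lam : ℝ) (m₁ m₂ : ℤ) (e₁ e₂ : ℕ)
    (h₁ : lam*a = m₁ + e₁/3) (h₂ : lam*b = m₂ + e₂/3)
    (he : (e₁ = 1 ∧ e₂ = 2) ∨ (e₁ = 2 ∧ e₂ = 1)) :
    1 + Complex.exp (2*(Real.pi:ℂ)*Complex.I*(lam:ℂ)*(a:ℂ))
      + Complex.exp (2*(Real.pi:ℂ)*Complex.I*(lam:ℂ)*(b:ℂ)) = 0 := by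
  set η : ℂ := Complex.exp (2*(Real.pi:ℂ)*Complex.I/3) with hηdef
  obtain ⟨hη3, hηs⟩ := aux3_root η (Or.inl hηdef)
  have hea : Complex.exp (2*(Real.pi:ℂ)*Complex.I*(lam:ℂ)*(a:ℂ)) = η^e₁ := by
    rw [show 2*(Real.pi:ℂ)*Complex.I*(lam:ℂ)*(a:ℂ)
        = 2*(Real.pi:ℂ)*Complex.I*(((lam*a : ℝ)):ℂ) by push_cast; ring]
    exact aux3_exp_eval _ m₁ e₁ h₁
  have heb : Complex.exp (2*(Real.pi:ℂ)*Complex.I*(lam:ℂ)*(b:ℂ)) = η^e₂ := by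
    rw [show 2*(Real.pi:ℂ)*Complex.I*(lam:ℂ)*(b:ℂ)
        = 2*(Real.pi:ℂ)*Complex.I*(((lam*b : ℝ)):ℂ) by push_cast; ring]
    exact aux3_exp_eval _ m₂ e₂ h₂
  rw [hea, heb]
  rcases he with ⟨he1, he2⟩ | ⟨he1, he2⟩ <;> subst he1 <;> subst he2
  · linear_combination hηs
  · linear_combination hηs

lemma aux3_ortho (j : ℕ) (r s : ℤ) (a b : ℝ)
    (ha : a = 3 ^ j * (3 * (r : ℝ) + 1)) (hb : b = 3 ^ j * (3 * (s : ℝ) + 2))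
    (hd1 : Disjoint (Set.Icc (0:ℝ) 1) (Set.Icc a (a+1)))
    (hd2 : Disjoint (Set.Icc (0:ℝ) 1) (Set.Icc b (b+1)))
    (hd3 : Disjoint (Set.Icc a (a+1)) (Set.Icc b (b+1)))
    (z₁ z₂ : ℤ) (k₁ k₂ : ℕ) (hk₁ : k₁ < 3) (hk₂ : k₂ < 3)
    (l m : ℝ) (hl : l = z₁ + k₁/3^(j+1)) (hm : m = z₂ + k₂/3^(j+1)) (hne : l ≠ m) :
    (∫ x in (Set.Icc (0:ℝ) 1 ∪ Set.Icc a (a+1) ∪ Set.Icc b (b+1)),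
        Complex.exp (2*(Real.pi:ℂ)*Complex.I*((l:ℂ)-(m:ℂ))*(x:ℂ))) = 0 := by
  have h3j : (3:ℝ)^j ≠ 0 := by positivity
  set lam : ℝ := l - m with hlam
  have hcast : ∀ x : ℝ, 2*(Real.pi:ℂ)*Complex.I*((l:ℂ)-(m:ℂ))*(x:ℂ)
      = 2*(Real.pi:ℂ)*Complex.I*((lam:ℝ):ℂ)*(x:ℂ) := by
    intro x; rw [hlam]; push_cast; ring
  simp_rw [hcast]
  set u : ℤ := z₁ - z₂ with hu
  set d : ℤ := (k₁:ℤ) - (k₂:ℤ) with hd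
  have hlam_eq : lam = (u:ℝ) + (d:ℝ)/3^(j+1) := by
    rw [hlam, hl, hm, hu, hd]; push_cast; ring
  by_cases hk : k₁ = k₂
  · -- diagonal case
    have hd0 : d = 0 := by omega
    have hlu : lam = (u:ℝ) := by rw [hlam_eq, hd0]; norm_num
    have hu0 : lam ≠ 0 := fun h => hne (by rw [hlam] at h; linarith)
    rw [aux3_piece a b hd1 hd2 hd3 lam hu0]
    have h1 : Complex.exp (2*(Real.pi:ℂ)*Complex.I*((lam:ℝ):ℂ)) = 1 := by
      have := aux3_exp_eval lam u 0 (by rw [hlu]; norm_num)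
      simpa using this
    rw [h1]
    simp
  · -- off-diagonal case
    have hd3' : ¬ (3:ℤ) ∣ d := by omega
    have hlam0 : lam ≠ 0 := by rw [hlam_eq]; exact_mod_cast aux3_lam_ne_zero j u d hd3'
    rw [aux3_piece a b hd1 hd2 hd3 lam hlam0]
    set q : ℤ := d / 3 with hq
    have hdsplit : (d:ℝ) = 3*(q:ℝ) + ((d % 3 : ℤ):ℝ) := by
      exact_mod_cast congrArg (fun x : ℤ => (x:ℝ)) (Int.mul_ediv_add_emod d 3).symm
    have step1a : lam * a = ((u*(3^j*(3*r+1)) + d*r : ℤ):ℝ) + (d:ℝ)/3 := by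
      rw [hlam_eq, ha, pow_succ]
      push_cast
      field_simp
      ring
    have step1b : lam * b = ((u*(3^j*(3*s+2)) + d*s : ℤ):ℝ) + 2*(d:ℝ)/3 := by
      rw [hlam_eq, hb, pow_succ]
      push_cast
      field_simp
      ring
    have hcase : d % 3 = 1 ∨ d % 3 = 2 := by omega
    have hfac : 1 + Complex.exp (2*(Real.pi:ℂ)*Complex.I*((lam:ℝ):ℂ)*(a:ℂ))
        + Complex.exp (2*(Real.pi:ℂ)*Complex.I*((lam:ℝ):ℂ)*(b:ℂ)) = 0 := by
      rcases hcase with h1 | h1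
      · have hd_eq : (d:ℝ) = 3*(q:ℝ) + 1 := by rw [hdsplit, h1]; norm_num
        refine aux3_offdiag a b lam (u*(3^j*(3*r+1)) + d*r + q)
          (u*(3^j*(3*s+2)) + d*s + 2*q) 1 2 ?_ ?_ (Or.inl ⟨rfl, rfl⟩)
        · push_cast
          push_cast at step1a
          linear_combination step1a + (1/3)*hd_eq
        · push_cast
          push_cast at step1b
          linear_combination step1b + (2/3)*hd_eq
      · have hd_eq : (d:ℝ) = 3*(q:ℝ) + 2 := by rw [hdsplit, h1]; norm_num
        refine aux3_offdiag a b lam (u*(3^j*(3*r+1)) + d*r + q)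
          (u*(3^j*(3*s+2)) + d*s + 2*q + 1) 2 1 ?_ ?_ (Or.inr ⟨rfl, rfl⟩)
        · push_cast
          push_cast at step1a
          linear_combination step1a + (1/3)*hd_eq
        · push_cast
          push_cast at step1b
          linear_combination step1b + (2/3)*hd_eq
    rw [hfac]
    simp



set_option maxHeartbeats 1000000 in
lemma aux_unique (H : ℝ → ℂ) (hH : MemLp H 2 (volume.restrict (Set.Ioc (0:ℝ) 1)))
    (h : ∀ n : ℤ, (∫ x in Set.Ioc (0:ℝ) 1,
      H x * Complex.exp (-(2 * (Real.pi:ℂ) * Complex.I * (n:ℂ) * (x:ℂ)))) = 0) :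
    H =ᵐ[volume.restrict (Set.Ioc (0:ℝ) 1)] 0 := by
  haveI : Fact ((0:ℝ) < 1) := ⟨one_pos⟩
  set ν : Measure ℝ := volume.restrict (Set.Ioc (0:ℝ) 1) with hν
  obtain ⟨H', hH'sm, hHH'⟩ : ∃ H', StronglyMeasurable H' ∧ H =ᵐ[ν] H' :=
    ⟨hH.1.mk H, hH.1.stronglyMeasurable_mk, hH.1.ae_eq_mk⟩
  have hH' : MemLp H' 2 ν := hH.ae_eq hHH'
  have hIoc : Set.Ioc (0:ℝ) (0+1) = Set.Ioc 0 1 := by norm_num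
  have hmp : MeasurePreserving (fun x : ℝ => (x : 𝕋)) ν volume := by
    have := AddCircle.measurePreserving_mk 1 0
    rwa [hIoc] at this
  have hvol : (volume : Measure 𝕋) = AddCircle.haarAddCircle := by
    rw [AddCircle.volume_eq_smul_haarAddCircle]; simp
  set φ : 𝕋 → ℂ := AddCircle.liftIoc 1 0 H' with hφdef
  have hφm : Measurable φ := by
    have : φ = H' ∘ ((↑) : Set.Ioc (0:ℝ) (0+1) → ℝ) ∘ (AddCircle.measurableEquivIoc 1 0) := rfl
    rw [this]
    exact hH'sm.measurable.comp (measurable_subtype_coe.comp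
      (AddCircle.measurableEquivIoc 1 0).measurable)
  have hφmk : ∀ x ∈ Set.Ioc (0:ℝ) 1, φ (x : 𝕋) = H' x := by
    intro x hx
    exact AddCircle.liftIoc_coe_apply (by rwa [hIoc])
  have hφmk' : (fun x => φ (x : 𝕋)) =ᵐ[ν] H' :=
    (ae_restrict_mem measurableSet_Ioc).mono fun x hx => hφmk x hx
  have hφ : MemLp φ 2 (AddCircle.haarAddCircle : Measure 𝕋) := by
    rw [← hvol, ← hmp.map_eq]
    refine (memLp_map_measure_iff ?_ hmp.measurable.aemeasurable).2 ?_
    · exact hφm.aestronglyMeasurable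
    · exact hH'.ae_eq hφmk'.symm
  set F : Lp ℂ 2 (AddCircle.haarAddCircle : Measure 𝕋) := hφ.toLp φ with hF
  have hcoeff : ∀ i : ℤ, fourierCoeff (F : 𝕋 → ℂ) i = 0 := by
    intro i
    have h1 : fourierCoeff (F : 𝕋 → ℂ) i = fourierCoeff φ i := by
      unfold fourierCoeff
      exact integral_congr_ae ((hφ.coeFn_toLp).mono fun x hx => by simp only [hF, hx])
    rw [h1, fourierCoeff_eq_intervalIntegral φ i 0,
      intervalIntegral.integral_of_le (by norm_num : (0:ℝ) ≤ 0+1), hIoc]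
    have h2 : (∫ x in Set.Ioc (0:ℝ) 1, (fourier (-i) (x:𝕋)) • φ (x:𝕋))
        = ∫ x in Set.Ioc (0:ℝ) 1,
            H x * Complex.exp (-(2 * (Real.pi:ℂ) * Complex.I * (i:ℂ) * (x:ℂ))) := by
      refine integral_congr_ae ?_
      filter_upwards [ae_restrict_mem measurableSet_Ioc, hHH'] with x hx hx2
      rw [smul_eq_mul, hφmk x hx, ← hx2, fourier_coe_apply, mul_comm]
      congr 1
      push_cast
      ring
    rw [h2, h i, smul_zero]
  have hF0 : F = 0 := by
    apply fourierBasis.repr.injective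
    rw [map_zero]
    ext i
    rw [fourierBasis_repr]
    simpa using hcoeff i
  have hφ0 : φ =ᵐ[(volume : Measure 𝕋)] 0 := by
    rw [hvol]
    refine (MemLp.toLp_eq_toLp_iff hφ MemLp.zero).1 ?_
    rw [MemLp.toLp_zero]
    exact hF0
  have hcomp : (φ ∘ fun x : ℝ => (x:𝕋)) =ᵐ[ν] ((0 : 𝕋 → ℂ) ∘ fun x : ℝ => (x:𝕋)) :=
    hmp.quasiMeasurePreserving.ae_eq_comp hφ0
  calc H =ᵐ[ν] H' := hHH'
    _ =ᵐ[ν] (fun x : ℝ => φ (x:𝕋)) := hφmk'.symm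
    _ =ᵐ[ν] 0 := hcomp

-- modulated uniqueness
lemma aux3_unique' (H : ℝ → ℂ) (c : ℝ) (hH : MemLp H 2 (volume.restrict (Set.Ioc (0:ℝ) 1)))
    (h : ∀ n : ℤ, (∫ x in Set.Ioc (0:ℝ) 1,
      H x * Complex.exp (-(2*(Real.pi:ℂ)*Complex.I*((n:ℂ) + (c:ℂ))*(x:ℂ)))) = 0) :
    H =ᵐ[volume.restrict (Set.Ioc (0:ℝ) 1)] 0 := by
  set u : ℝ → ℂ := fun x => Complex.exp (-(2*(Real.pi:ℂ)*Complex.I*(c:ℂ)*(x:ℂ))) with hu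
  have hucont : Continuous u := by
    apply Complex.continuous_exp.comp
    fun_prop
  have hunorm : ∀ x : ℝ, ‖u x‖ = 1 := by
    intro x
    rw [hu]
    simp only
    rw [show -(2*(Real.pi:ℂ)*Complex.I*(c:ℂ)*(x:ℂ))
        = ((-(2*Real.pi*c*x) : ℝ):ℂ) * Complex.I by push_cast; ring]
    exact Complex.norm_exp_ofReal_mul_I _
  have hG : MemLp (fun x => H x * u x) 2 (volume.restrict (Set.Ioc (0:ℝ) 1)) := by
    refine MemLp.of_le hH (hH.aestronglyMeasurable.mul hucont.aestronglyMeasurable) ?_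
    exact Filter.Eventually.of_forall (fun x => by rw [norm_mul, hunorm, mul_one])
  have hG0 : (fun x => H x * u x) =ᵐ[volume.restrict (Set.Ioc (0:ℝ) 1)] 0 := by
    refine aux_unique _ hG (fun n => ?_)
    rw [← h n]
    refine integral_congr_ae (Filter.Eventually.of_forall (fun x => ?_))
    show H x * u x * _ = H x * _
    rw [mul_assoc, ← Complex.exp_add]
    congr 2
    push_cast
    ring
  filter_upwards [hG0] with x hx
  rcases mul_eq_zero.mp hx with h' | h'
  · exact h'
  · exact absurd h' (Complex.exp_ne_zero _)

-- pointwise Vandermonde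
lemma aux3_vdm (ω x y z : ℂ) (hω3 : ω^3 = 1) (hs : 1+ω+ω^2 = 0)
    (h0 : x + y + z = 0) (h1 : x + ω*y + ω^2*z = 0) (h2 : x + ω^2*y + ω^4*z = 0) :
    x = 0 ∧ y = 0 ∧ z = 0 := by
  refine ⟨?_, ?_, ?_⟩
  · linear_combination (h0 + h1 + h2)/3 - (y + z)/3 * hs - z*ω/3 * hω3
  · linear_combination (h0 + ω^2*h1 + ω*h2)/3 - (x+z)/3*hs - (2*y/3 + (ω+ω^2)*z/3)*hω3
  · linear_combination (h0 + ω*h1 + ω^2*h2)/3 - (x+y)/3*hs - (ω*y/3 + (2+ω^3)*z/3)*hω3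

-- ae zero on union
lemma aux3_ae_union {f : ℝ → ℂ} {s t : Set ℝ}
    (hs : f =ᵐ[volume.restrict s] 0) (ht : f =ᵐ[volume.restrict t] 0) :
    f =ᵐ[volume.restrict (s ∪ t)] 0 := by
  simp only [Filter.EventuallyEq, ae_iff, Pi.zero_apply] at *
  refine le_antisymm ?_ (zero_le)
  calc (volume.restrict (s ∪ t)) {x | ¬ f x = 0}
      ≤ (volume.restrict s + volume.restrict t) {x | ¬ f x = 0} :=
        Measure.le_iff'.1 (Measure.restrict_union_le s t) _
    _ = 0 := by rw [Measure.add_apply, hs, ht, add_zero]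


theorem stmt3 (j : ℕ) (r s : ℤ) (a b : ℝ)
    (ha : a = 3 ^ j * (3 * (r : ℝ) + 1)) (hb : b = 3 ^ j * (3 * (s : ℝ) + 2))
    (hd1 : Disjoint (Set.Icc (0 : ℝ) 1) (Set.Icc a (a + 1)))
    (hd2 : Disjoint (Set.Icc (0 : ℝ) 1) (Set.Icc b (b + 1)))
    (hd3 : Disjoint (Set.Icc a (a + 1)) (Set.Icc b (b + 1))) :
    IsSpectrum (Set.Icc 0 1 ∪ Set.Icc a (a + 1) ∪ Set.Icc b (b + 1))
      {l : ℝ | ∃ z : ℤ, l = z ∨ l = z + 1 / 3 ^ (j + 1) ∨ l = z + 2 / 3 ^ (j + 1)} := by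
  constructor
  · -- orthogonality
    rintro l ⟨z₁, hl⟩ m ⟨z₂, hm⟩ hne
    have Hl : ∃ k₁ : ℕ, k₁ < 3 ∧ l = z₁ + k₁/3^(j+1) := by
      rcases hl with h | h | h
      · exact ⟨0, by norm_num, by rw [h]; norm_num⟩
      · exact ⟨1, by norm_num, by rw [h]; norm_num⟩
      · exact ⟨2, by norm_num, by rw [h]; norm_num⟩
    have Hm : ∃ k₂ : ℕ, k₂ < 3 ∧ m = z₂ + k₂/3^(j+1) := by
      rcases hm with h | h | h
      · exact ⟨0, by norm_num, by rw [h]; norm_num⟩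
      · exact ⟨1, by norm_num, by rw [h]; norm_num⟩
      · exact ⟨2, by norm_num, by rw [h]; norm_num⟩
    obtain ⟨k₁, hk₁, hl'⟩ := Hl
    obtain ⟨k₂, hk₂, hm'⟩ := Hm
    exact aux3_ortho j r s a b ha hb hd1 hd2 hd3 z₁ z₂ k₁ k₂ hk₁ hk₂ l m hl' hm' hne
  · -- completeness
    intro f hf hint
    haveI : Fact ((0:ℝ) < 1) := ⟨one_pos⟩
    set ν : Measure ℝ := volume.restrict (Set.Ioc (0:ℝ) 1) with hν
    set Ω : Set ℝ := Set.Icc (0:ℝ) 1 ∪ Set.Icc a (a+1) ∪ Set.Icc b (b+1) with hΩ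
    haveI : IsFiniteMeasure (volume.restrict Ω) := by
      constructor
      rw [Measure.restrict_apply_univ, hΩ]
      refine lt_of_le_of_lt (measure_union_le _ _) ?_
      refine ENNReal.add_lt_top.2 ⟨lt_of_le_of_lt (measure_union_le _ _) ?_, measure_Icc_lt_top⟩
      exact ENNReal.add_lt_top.2 ⟨measure_Icc_lt_top, measure_Icc_lt_top⟩
    haveI : IsFiniteMeasure ν := by
      constructor
      rw [hν, Measure.restrict_apply_univ]
      exact measure_Ioc_lt_top
    have hfi : Integrable f (volume.restrict Ω) := hf.integrable one_le_two
    set g : ℝ → ℝ → ℂ := fun c t => f (c + t) with hg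
    set E : ℝ → ℝ → ℂ :=
      fun lc x => Complex.exp (-(2*(Real.pi:ℂ)*Complex.I*((lc:ℝ):ℂ)*((x:ℝ):ℂ))) with hE
    have hEcont : ∀ lc : ℝ, Continuous (E lc) := by
      intro lc
      apply Complex.continuous_exp.comp
      fun_prop
    have hEnorm : ∀ (lc x : ℝ), ‖E lc x‖ = 1 := by
      intro lc x
      rw [hE]
      simp only
      rw [show -(2*(Real.pi:ℂ)*Complex.I*((lc:ℝ):ℂ)*((x:ℝ):ℂ))
          = ((-(2*Real.pi*lc*x) : ℝ):ℂ) * Complex.I by push_cast; ring]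
      exact Complex.norm_exp_ofReal_mul_I _
    have h0sub : Set.Icc (0:ℝ) (0+1) ⊆ Ω := by
      rw [hΩ, show (0:ℝ)+1 = 1 by norm_num]
      exact (Set.subset_union_left).trans Set.subset_union_left
    have hasub : Set.Icc a (a+1) ⊆ Ω := by
      rw [hΩ]
      exact (Set.subset_union_right).trans Set.subset_union_left
    have hbsub : Set.Icc b (b+1) ⊆ Ω := Set.subset_union_right
    have hgmem : ∀ c : ℝ, Set.Icc c (c+1) ⊆ Ω → MemLp (g c) 2 ν := by
      intro c hc
      have h1 : MemLp f 2 (volume.restrict (Set.Ioc c (c+1))) :=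
        hf.mono_measure (Measure.restrict_mono (Set.Ioc_subset_Icc_self.trans hc) le_rfl)
      exact h1.comp_measurePreserving (aux3_mp_shift c)
    have hfE : ∀ lc : ℝ, Integrable (fun x => f x * E lc x) (volume.restrict Ω) := by
      intro lc
      have h1 : Integrable (fun x => E lc x * f x) (volume.restrict Ω) :=
        hfi.bdd_mul (hEcont lc).aestronglyMeasurable (Filter.Eventually.of_forall fun x => le_of_eq (hEnorm lc x))
      have h2 : (fun x => f x * E lc x) = fun x => E lc x * f x :=
        funext fun x => mul_comm _ _
      rw [h2]
      exact h1
    have hgE : ∀ (c : ℝ), Set.Icc c (c+1) ⊆ Ω → ∀ lc : ℝ,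
        Integrable (fun t => g c t * E lc t) ν := by
      intro c hc lc
      have h1 : Integrable (g c) ν := (hgmem c hc).integrable one_le_two
      have h2 : Integrable (fun t => E lc t * g c t) ν :=
        h1.bdd_mul (hEcont lc).aestronglyMeasurable (Filter.Eventually.of_forall fun x => le_of_eq (hEnorm lc x))
      have h3 : (fun t => g c t * E lc t) = fun t => E lc t * g c t :=
        funext fun x => mul_comm _ _
      rw [h3]
      exact h2
    have hsplit : ∀ lc : ℝ, (∫ x in Ω, f x * E lc x) =
        (∫ x in Set.Icc (0:ℝ) 1, f x * E lc x) + (∫ x in Set.Icc a (a+1), f x * E lc x)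
        + (∫ x in Set.Icc b (b+1), f x * E lc x) := by
      intro lc
      have hInt : IntegrableOn (fun x => f x * E lc x) Ω volume := hfE lc
      have hs1 : Set.Icc (0:ℝ) 1 ⊆ Ω := by
        rw [hΩ]; exact Set.subset_union_left.trans Set.subset_union_left
      rw [hΩ, setIntegral_union (Disjoint.union_left hd2 hd3) measurableSet_Icc
          ((hInt.mono_set (by rw [hΩ]; exact Set.subset_union_left)))
          (hInt.mono_set hbsub),
        setIntegral_union hd1 measurableSet_Icc (hInt.mono_set hs1)
          (hInt.mono_set hasub)]
    have htrans : ∀ (c lc : ℝ), (∫ x in Set.Icc c (c+1), f x * E lc x)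
        = Complex.exp (-(2*(Real.pi:ℂ)*Complex.I*((lc:ℝ):ℂ)*((c:ℝ):ℂ)))
          * ∫ t in Set.Ioc (0:ℝ) 1, g c t * E lc t := by
      intro c lc
      rw [aux3_int_shift c (fun x => f x * E lc x), ← integral_const_mul]
      refine integral_congr_ae (Filter.Eventually.of_forall (fun t => ?_))
      show f (c+t) * E lc (c+t) = _
      have hexp : E lc (c+t)
          = Complex.exp (-(2*(Real.pi:ℂ)*Complex.I*((lc:ℝ):ℂ)*((c:ℝ):ℂ))) * E lc t := by
        rw [hE]
        simp only
        rw [← Complex.exp_add]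
        congr 1
        push_cast
        ring
      rw [hexp, hg]
      ring
    set ω : ℂ := Complex.exp (-(2*(Real.pi:ℂ)*Complex.I/3)) with hω
    obtain ⟨hω3, hωs⟩ := aux3_root ω (Or.inr hω)
    have h3j : (3:ℝ)^j ≠ 0 := by positivity
    have hmain : ∀ (k : ℕ), k < 3 → ∀ n : ℤ,
        (∫ t in Set.Ioc (0:ℝ) 1,
          (g 0 t + ω^k * g a t + ω^(2*k) * g b t) * E ((n:ℝ) + (k:ℝ)/3^(j+1)) t) = 0 := by
      intro k hk3 n
      set lc : ℝ := (n:ℝ) + (k:ℝ)/3^(j+1) with hlc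
      have hmemΛ : lc ∈ {l : ℝ | ∃ z : ℤ, l = z ∨ l = z + 1 / 3 ^ (j + 1)
          ∨ l = z + 2 / 3 ^ (j + 1)} := by
        refine ⟨n, ?_⟩
        interval_cases k
        · left; rw [hlc]; norm_num
        · right; left; rw [hlc]; norm_num
        · right; right; rw [hlc]; norm_num
      have h0 := hint lc hmemΛ
      have hEeq : (fun x : ℝ => f x * Complex.exp (-(2 * (Real.pi:ℂ) * Complex.I
          * ((lc:ℝ):ℂ) * (x:ℂ)))) = fun x => f x * E lc x := by
        funext x
        rw [hE]
      rw [hEeq] at h0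
      rw [hsplit lc, show Set.Icc (0:ℝ) 1 = Set.Icc (0:ℝ) (0+1) by norm_num,
        htrans 0 lc, htrans a lc, htrans b lc] at h0
      have hw0 : Complex.exp (-(2*(Real.pi:ℂ)*Complex.I*((lc:ℝ):ℂ)*(((0:ℝ)):ℂ))) = 1 := by
        norm_num
      have hwa : Complex.exp (-(2*(Real.pi:ℂ)*Complex.I*((lc:ℝ):ℂ)*((a:ℝ):ℂ))) = ω^k := by
        rw [show 2*(Real.pi:ℂ)*Complex.I*((lc:ℝ):ℂ)*((a:ℝ):ℂ)
            = 2*(Real.pi:ℂ)*Complex.I*(((lc*a : ℝ)):ℂ) by push_cast; ring]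
        refine aux3_exp_eval_neg (lc*a) (n*(3^j*(3*r+1)) + k*r) k ?_
        rw [hlc, ha, pow_succ]
        push_cast
        field_simp
        ring
      have hwb : Complex.exp (-(2*(Real.pi:ℂ)*Complex.I*((lc:ℝ):ℂ)*((b:ℝ):ℂ))) = ω^(2*k) := by
        rw [show 2*(Real.pi:ℂ)*Complex.I*((lc:ℝ):ℂ)*((b:ℝ):ℂ)
            = 2*(Real.pi:ℂ)*Complex.I*(((lc*b : ℝ)):ℂ) by push_cast; ring]
        refine aux3_exp_eval_neg (lc*b) (n*(3^j*(3*s+2)) + k*s) (2*k) ?_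
        rw [hlc, hb, pow_succ]
        push_cast
        field_simp
        ring
      rw [hw0, one_mul, hwa, hwb] at h0
      have hdistrib : (∫ t in Set.Ioc (0:ℝ) 1,
            (g 0 t + ω^k * g a t + ω^(2*k) * g b t) * E lc t)
          = (∫ t in Set.Ioc (0:ℝ) 1, g 0 t * E lc t)
            + ω^k * (∫ t in Set.Ioc (0:ℝ) 1, g a t * E lc t)
            + ω^(2*k) * (∫ t in Set.Ioc (0:ℝ) 1, g b t * E lc t) := by
        have i0 := hgE 0 h0sub lc
        have ia := (hgE a hasub lc).const_mul (ω^k)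
        have ib := (hgE b hbsub lc).const_mul (ω^(2*k))
        calc (∫ t in Set.Ioc (0:ℝ) 1, (g 0 t + ω^k * g a t + ω^(2*k) * g b t) * E lc t)
            = ∫ t in Set.Ioc (0:ℝ) 1,
                ((g 0 t * E lc t + ω^k * (g a t * E lc t)) + ω^(2*k) * (g b t * E lc t)) :=
              integral_congr_ae (Filter.Eventually.of_forall fun t => by ring)
          _ = (∫ t in Set.Ioc (0:ℝ) 1, (g 0 t * E lc t + ω^k * (g a t * E lc t)))
              + ∫ t in Set.Ioc (0:ℝ) 1, ω^(2*k) * (g b t * E lc t) :=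
              integral_add (i0.add ia) ib
          _ = (∫ t in Set.Ioc (0:ℝ) 1, g 0 t * E lc t)
            + ω^k * (∫ t in Set.Ioc (0:ℝ) 1, g a t * E lc t)
            + ω^(2*k) * (∫ t in Set.Ioc (0:ℝ) 1, g b t * E lc t) := by
              rw [integral_add i0 ia, integral_const_mul, integral_const_mul]
      rw [hdistrib]
      exact h0
    have hae : ∀ k : ℕ, k < 3 →
        (fun t => g 0 t + ω^k * g a t + ω^(2*k) * g b t) =ᵐ[ν] 0 := by
      intro k hk3
      refine aux3_unique' _ ((k:ℝ)/3^(j+1))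
        (((hgmem 0 h0sub).add ((hgmem a hasub).const_mul _)).add
          ((hgmem b hbsub).const_mul _)) (fun n => ?_)
      have := hmain k hk3 n
      rw [← this]
      refine integral_congr_ae (Filter.Eventually.of_forall (fun t => ?_))
      show _ = _ * E ((n:ℝ) + (k:ℝ)/3^(j+1)) t
      rw [hE]
      congr 2
      push_cast
      ring
    have hVDM : ∀ᵐ t ∂ν, g 0 t = 0 ∧ g a t = 0 ∧ g b t = 0 := by
      filter_upwards [hae 0 (by norm_num), hae 1 (by norm_num), hae 2 (by norm_num)]
        with t h0 h1 h2
      have h0' : g 0 t + g a t + g b t = 0 := by simpa using h0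
      have h1' : g 0 t + ω * g a t + ω^2 * g b t = 0 := by
        have := h1
        simp only [Pi.zero_apply, pow_one] at this
        convert this using 2 <;> norm_num
      have h2' : g 0 t + ω^2 * g a t + ω^4 * g b t = 0 := by
        have := h2
        simp only [Pi.zero_apply] at this
        convert this using 2 <;> norm_num
      exact aux3_vdm ω _ _ _ hω3 hωs h0' h1' h2'
    have hback : ∀ c : ℝ, (∀ᵐ t ∂ν, g c t = 0) →
        f =ᵐ[volume.restrict (Set.Icc c (c+1))] 0 := by
      intro c hc
      have h1 : (g c) =ᵐ[ν] (0 : ℝ → ℂ) := hc.mono fun t ht => by simp [ht]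
      have h2 := (aux3_mp_unshift c).quasiMeasurePreserving.ae_eq_comp h1
      have h3 : (g c ∘ fun t : ℝ => -c + t) = f := by
        funext x
        show f (c + (-c + x)) = f x
        congr 1
        ring
      have h4 : ((0 : ℝ → ℂ) ∘ fun t : ℝ => -c + t) = (0 : ℝ → ℂ) := rfl
      rw [h3, h4] at h2
      rwa [Measure.restrict_congr_set Ioc_ae_eq_Icc] at h2
    have hA : f =ᵐ[volume.restrict (Set.Icc (0:ℝ) 1)] 0 := by
      have := hback 0 (hVDM.mono fun t ht => ht.1)
      rwa [show (0:ℝ)+1 = 1 by norm_num] at this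
    have hB : f =ᵐ[volume.restrict (Set.Icc a (a+1))] 0 :=
      hback a (hVDM.mono fun t ht => ht.2.1)
    have hC : f =ᵐ[volume.restrict (Set.Icc b (b+1))] 0 :=
      hback b (hVDM.mono fun t ht => ht.2.2)
    rw [hΩ] at *
    exact aux3_ae_union (aux3_ae_union hA hB) hC

end
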